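/- arXiv:1308.5314 — 2 statements merged into one kernel-verified Lean document; each statement's English description precedes it below -/
import Mathlib

section
/- L^2-stability of the spectral method for a linear hyperbolic equation: if the N-degree trigonometric polynomial u_N(·,t) solves ∂_t u_N + ∂_x S_N[q(x) u_N] = 0 on the circle, with q ∈ C^1 2π-periodic, then ‖u_N(·,t)‖_{L^2}^2 ≤ e^{q'_∞ t} ‖u_N(·,0)‖_{L^2}^2 where q'_∞ = max_x |q'(x)|. -/
open Complex Finset intervalIntegral

/-- The `k`-th Fourier coefficient of a `2π`-periodic function `f : ℝ → ℂ`. -/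
noncomputable def fc (f : ℝ → ℂ) (k : ℤ) : ℂ :=
  (1 / (2 * Real.pi)) • ∫ x in (0 : ℝ)..(2 * Real.pi),
    f x * Complex.exp (-(Complex.I * (k : ℂ) * (x : ℂ)))

/-- The spectral Fourier projection `S_N f (x) = Σ_{|k|≤N} f̂(k) e^{ikx}`. -/
noncomputable def SN (N : ℕ) (f : ℝ → ℂ) (x : ℝ) : ℂ :=
  ∑ k ∈ Finset.Icc (-(N : ℤ)) (N : ℤ), fc f k * Complex.exp (Complex.I * (k : ℂ) * (x : ℂ))

/-- `f` is a trigonometric polynomial of degree at most `N`. -/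
def IsTrigPoly (N : ℕ) (f : ℝ → ℂ) : Prop :=
  ∃ c : ℤ → ℂ, ∀ x : ℝ,
    f x = ∑ k ∈ Finset.Icc (-(N : ℤ)) (N : ℤ), c k * Complex.exp (Complex.I * (k : ℂ) * (x : ℂ))

noncomputable def ek (k : ℤ) (x : ℝ) : ℂ := Complex.exp (Complex.I * (k : ℂ) * (x : ℂ))

lemma hasDerivAt_ek (k : ℤ) (x : ℝ) :
    HasDerivAt (fun y : ℝ => ek k y) (Complex.I * k * ek k x) x := by
  have h1 : HasDerivAt (fun y : ℝ => Complex.I * (k:ℂ) * (y:ℂ)) (Complex.I * k) x := by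
    simpa using (Complex.ofRealCLM.hasDerivAt (x := x)).const_mul (Complex.I * (k:ℂ))
  simpa [ek, mul_comm] using h1.cexp

lemma continuous_ek (k : ℤ) : Continuous (ek k) := by
  have := fun x => (hasDerivAt_ek k x).continuousAt
  exact continuous_iff_continuousAt.2 this

lemma ek_mul (j k : ℤ) (x : ℝ) : ek j x * ek k x = ek (j + k) x := by
  rw [ek, ek, ek, ← Complex.exp_add]
  push_cast; ring_nf

lemma ek_zero (x : ℝ) : ek 0 x = 1 := by simp [ek]

lemma conj_ek (k : ℤ) (x : ℝ) : (starRingEnd ℂ) (ek k x) = ek (-k) x := by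
  rw [ek, ek, ← Complex.exp_conj]
  congr 1
  simp only [map_mul, Complex.conj_I, Complex.conj_ofReal, map_intCast]
  push_cast
  ring

lemma ek_at_zero (k : ℤ) : ek k 0 = 1 := by simp [ek]

lemma ek_period (k : ℤ) (x : ℝ) : ek k (x + 2 * Real.pi) = ek k x := by
  rw [ek, ek]
  push_cast
  rw [mul_add, Complex.exp_add]
  have : Complex.exp (Complex.I * k * (2 * Real.pi)) = 1 := by
    have := Complex.exp_int_mul_two_pi_mul_I k
    rw [← this]; congr 1; push_cast; ring
  rw [this, mul_one]

lemma neg_exp_eq_ek (k : ℤ) (x : ℝ) :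
    Complex.exp (-(Complex.I * (k : ℂ) * (x : ℂ))) = ek (-k) x := by
  rw [ek]; congr 1; push_cast; ring

lemma integral_ek (m : ℤ) :
    (∫ x in (0:ℝ)..(2*Real.pi), ek m x) = if m = 0 then (2*Real.pi : ℂ) else 0 := by
  rcases eq_or_ne m 0 with h | h
  · simp [h, ek_zero]
  · simp only [h, if_false]
    have hm : (Complex.I * m) ≠ 0 := by
      simp [Complex.I_ne_zero, Complex.ext_iff]
      exact_mod_cast h
    have hderiv : ∀ x ∈ Set.uIcc (0:ℝ) (2*Real.pi),
        HasDerivAt (fun y : ℝ => (Complex.I * m)⁻¹ * ek m y) (ek m x) x := by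
      intro x _
      have h := (hasDerivAt_ek m x).const_mul ((Complex.I * (m:ℂ))⁻¹)
      have h2 : (Complex.I * (m:ℂ))⁻¹ * (Complex.I * m * ek m x) = ek m x := by
        rw [← mul_assoc, inv_mul_cancel₀ hm, one_mul]
      rwa [h2] at h
    rw [intervalIntegral.integral_eq_sub_of_hasDerivAt hderiv
      ((continuous_ek m).intervalIntegrable _ _)]
    have h1 : ek m (2*Real.pi) = 1 := by
      have := ek_period m 0
      rwa [zero_add, ek_at_zero] at this
    rw [h1, ek_at_zero]
    ring

lemma tp_continuous (N : ℕ) (c : ℤ → ℂ) :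
    Continuous (fun x : ℝ => ∑ j ∈ Finset.Icc (-(N:ℤ)) (N:ℤ), c j * ek j x) :=
  continuous_finset_sum _ fun j _ => continuous_const.mul (continuous_ek j)

lemma fc_trig (N : ℕ) (c : ℤ → ℂ) {k : ℤ} (hk : k ∈ Finset.Icc (-(N:ℤ)) (N:ℤ)) :
    fc (fun x => ∑ j ∈ Finset.Icc (-(N:ℤ)) (N:ℤ), c j * ek j x) k = c k := by
  have hpi : (2 * Real.pi : ℂ) ≠ 0 := by
    simp [Real.pi_ne_zero, Complex.ext_iff, Real.pi_pos.ne']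
  rw [fc]
  have : ∀ x : ℝ, (∑ j ∈ Finset.Icc (-(N:ℤ)) (N:ℤ), c j * ek j x) *
      Complex.exp (-(Complex.I * (k:ℂ) * (x:ℂ)))
      = ∑ j ∈ Finset.Icc (-(N:ℤ)) (N:ℤ), c j * ek (j - k) x := by
    intro x
    rw [neg_exp_eq_ek, Finset.sum_mul]
    refine Finset.sum_congr rfl fun j _ => ?_
    rw [mul_assoc, ek_mul]
    ring_nf
  simp only [this]
  rw [intervalIntegral.integral_finset_sum (fun j _ =>
    (continuous_const.fun_mul (continuous_ek _)).intervalIntegrable _ _)]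
  have : ∀ j ∈ Finset.Icc (-(N:ℤ)) (N:ℤ),
      (∫ x in (0:ℝ)..(2*Real.pi), c j * ek (j-k) x)
        = if j = k then c j * (2*Real.pi:ℂ) else 0 := by
    intro j _
    rw [intervalIntegral.integral_const_mul, integral_ek]
    by_cases h : j = k <;> simp [h, sub_eq_zero]
  rw [Finset.sum_congr rfl this, Finset.sum_ite_eq' _ k, if_pos hk]
  field_simp
  rw [Complex.real_smul]
  push_cast
  have hpi' : (Real.pi:ℂ) ≠ 0 := Complex.ofReal_ne_zero.mpr Real.pi_ne_zero
  field_simp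

lemma re_intervalIntegral {f : ℝ → ℂ} {a b : ℝ} (hf : IntervalIntegrable f MeasureTheory.volume a b) :
    (∫ x in a..b, f x).re = ∫ x in a..b, (f x).re := by
  have h1 := integral_re (𝕜 := ℂ) hf.1
  have h2 := integral_re (𝕜 := ℂ) hf.2
  simp only [RCLike.re_to_complex] at h1 h2
  rw [intervalIntegral, intervalIntegral, Complex.sub_re, ← h1, ← h2]

lemma parseval_trig (N : ℕ) (c : ℤ → ℂ) :
    (∫ x in (0:ℝ)..(2*Real.pi), ‖∑ j ∈ Finset.Icc (-(N:ℤ)) (N:ℤ), c j * ek j x‖^2)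
      = 2 * Real.pi * ∑ j ∈ Finset.Icc (-(N:ℤ)) (N:ℤ), Complex.normSq (c j) := by
  set S := Finset.Icc (-(N:ℤ)) (N:ℤ)
  set f : ℝ → ℂ := fun x => ∑ j ∈ S, c j * ek j x with hf
  have hfc : Continuous f := tp_continuous N c
  have key : ∀ x : ℝ, f x * (starRingEnd ℂ) (f x)
      = ∑ j ∈ S, ∑ l ∈ S, c j * (starRingEnd ℂ) (c l) * ek (j - l) x := by
    intro x
    rw [hf]
    simp only [map_sum, Finset.sum_mul_sum, map_mul, conj_ek]
    refine Finset.sum_congr rfl fun j _ => Finset.sum_congr rfl fun l _ => ?_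
    rw [mul_mul_mul_comm, ek_mul]
    ring_nf
  have h1 : ∀ x : ℝ, ‖f x‖^2 = (f x * (starRingEnd ℂ) (f x)).re := by
    intro x
    rw [Complex.mul_conj, Complex.ofReal_re, ← Complex.sq_norm]
  calc (∫ x in (0:ℝ)..(2*Real.pi), ‖f x‖^2)
      = ∫ x in (0:ℝ)..(2*Real.pi), (f x * (starRingEnd ℂ) (f x)).re := by
        simp only [h1]
    _ = (∫ x in (0:ℝ)..(2*Real.pi), f x * (starRingEnd ℂ) (f x)).re := by
        have hint : IntervalIntegrable (fun x => f x * (starRingEnd ℂ) (f x))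
            MeasureTheory.volume 0 (2*Real.pi) :=
          (hfc.mul (Complex.continuous_conj.comp hfc)).intervalIntegrable _ _
        exact (re_intervalIntegral hint).symm
    _ = 2 * Real.pi * ∑ j ∈ S, Complex.normSq (c j) := by
        simp only [key]
        rw [intervalIntegral.integral_finset_sum (fun j _ =>
          (continuous_finset_sum _ fun l _ =>
            (continuous_const.fun_mul (continuous_ek _))).intervalIntegrable _ _)]
        have : ∀ j ∈ S, (∫ x in (0:ℝ)..(2*Real.pi),
            ∑ l ∈ S, c j * (starRingEnd ℂ) (c l) * ek (j - l) x)
            = (2*Real.pi:ℂ) * (c j * (starRingEnd ℂ) (c j)) := by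
          intro j hj
          rw [intervalIntegral.integral_finset_sum (fun l _ =>
            (continuous_const.fun_mul (continuous_ek _)).intervalIntegrable _ _)]
          have : ∀ l ∈ S, (∫ x in (0:ℝ)..(2*Real.pi), c j * (starRingEnd ℂ) (c l) * ek (j-l) x)
              = if l = j then (2*Real.pi:ℂ) * (c j * (starRingEnd ℂ) (c l)) else 0 := by
            intro l _
            rw [intervalIntegral.integral_const_mul, integral_ek]
            by_cases h : l = j
            · simp [h]; ring
            · have : j - l ≠ 0 := fun hc => h (by omega)
              simp [h, this]
          rw [Finset.sum_congr rfl this, Finset.sum_ite_eq' _ j, if_pos hj]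
        rw [Finset.sum_congr rfl this, ← Finset.mul_sum]
        simp only [Complex.mul_conj]
        have : ((2*Real.pi:ℝ):ℂ) * ∑ j ∈ S, (Complex.normSq (c j) : ℂ)
            = ((2*Real.pi * ∑ j ∈ S, Complex.normSq (c j) : ℝ) : ℂ) := by
          push_cast; ring
        rw [show ((2:ℂ)*(Real.pi:ℂ)) = ((2*Real.pi:ℝ):ℂ) by push_cast; ring, this,
          Complex.ofReal_re]

lemma sum_ek_sample {M : ℕ} (hM : 0 < M) {r : ℤ} (hr : r ≠ 0) (hrM : r.natAbs < M) :
    ∑ m ∈ Finset.range M, ek r (2*Real.pi*m/M) = 0 := by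
  have hMC : ((M:ℝ):ℂ) ≠ 0 := by
    simp only [ne_eq, Complex.ofReal_eq_zero, Nat.cast_eq_zero]
    omega
  set ω : ℂ := Complex.exp (Complex.I * (r:ℂ) * ((2*Real.pi/M : ℝ):ℂ)) with hω
  have hpow : ∀ m : ℕ, ek r (2*Real.pi*m/M) = ω ^ m := by
    intro m
    rw [hω, ← Complex.exp_nat_mul, ek]
    congr 1
    push_cast
    ring
  have hM' : (M:ℂ) ≠ 0 := Nat.cast_ne_zero.2 (by omega)
  have hωM : ω ^ M = 1 := by
    rw [hω, ← Complex.exp_nat_mul]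
    rw [show ((M:ℕ):ℂ) * (Complex.I * (r:ℂ) * ((2*Real.pi/M : ℝ):ℂ)) = (r:ℂ) * (2*Real.pi*Complex.I) by
      push_cast
      field_simp]
    exact Complex.exp_int_mul_two_pi_mul_I r
  have hω1 : ω ≠ 1 := by
    intro h
    have h' : Complex.exp (Complex.I * (r:ℂ) * ((2*Real.pi/M : ℝ):ℂ)) = 1 := h
    rw [Complex.exp_eq_one_iff] at h'
    obtain ⟨n, hn⟩ := h' 
    have hI : Complex.I * (r:ℂ) * ((2*Real.pi/M : ℝ):ℂ) = Complex.I * ((n * (2*Real.pi) : ℝ):ℂ) := by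
      rw [hn]; push_cast; ring
    have h2 : ((r * (2*Real.pi/M) : ℝ):ℂ) = ((n * (2*Real.pi) : ℝ):ℂ) := by
      apply mul_left_cancel₀ Complex.I_ne_zero
      rw [← hI]; push_cast; ring
    have h3 : (r : ℝ) * (2*Real.pi/M) = n * (2*Real.pi) := Complex.ofReal_injective h2
    have hMR : (M:ℝ) ≠ 0 := by positivity
    have h6 : (r:ℝ) * (2*Real.pi) = n * (2*Real.pi) * M := by
      calc (r:ℝ)*(2*Real.pi) = (r * (2*Real.pi/M))*M := by field_simp
      _ = (n*(2*Real.pi))*M := by rw [h3]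
    have h2pi : (2*Real.pi) ≠ 0 := by positivity
    have h4 : (r : ℝ) = n * M :=
      mul_right_cancel₀ h2pi (by rw [h6]; ring)
    have h5 : r = n * M := by exact_mod_cast h4
    rcases eq_or_ne n 0 with h6 | h6
    · exact hr (by simp [h5, h6])
    · have : (M:ℤ) ≤ r.natAbs := by
        rw [h5]
        calc (M:ℤ) = 1 * M := (one_mul _).symm
        _ ≤ |n| * M := by
          have : 1 ≤ |n| := Int.one_le_abs h6
          exact mul_le_mul_of_nonneg_right this (by positivity)
        _ = |n * M| := by rw [abs_mul]; simp
        _ = (n*M).natAbs := Int.abs_eq_natAbs _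
      omega
  simp only [hpow]
  rw [geom_sum_eq hω1, hωM]
  simp

lemma dft (N : ℕ) (c : ℤ → ℂ) {k : ℤ} (hk : k ∈ Finset.Icc (-(N:ℤ)) (N:ℤ)) :
    (1/(((2*N+1 : ℕ):ℝ):ℂ)) * ∑ m ∈ Finset.range (2*N+1),
      (∑ j ∈ Finset.Icc (-(N:ℤ)) (N:ℤ), c j * ek j (2*Real.pi*m/(2*N+1)))
        * ek (-k) (2*Real.pi*m/(2*N+1)) = c k := by
  have hMC : (((2*N+1 : ℕ):ℝ):ℂ) ≠ 0 := by
    simp only [ne_eq, Complex.ofReal_eq_zero, Nat.cast_eq_zero]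
    omega
  have expand : ∀ m : ℕ,
      (∑ j ∈ Finset.Icc (-(N:ℤ)) (N:ℤ), c j * ek j (2*Real.pi*m/(2*N+1)))
        * ek (-k) (2*Real.pi*m/(2*N+1))
      = ∑ j ∈ Finset.Icc (-(N:ℤ)) (N:ℤ), c j * ek (j - k) (2*Real.pi*m/(2*N+1)) := by
    intro m
    rw [Finset.sum_mul]
    refine Finset.sum_congr rfl fun j _ => ?_
    rw [mul_assoc, ek_mul]
    ring_nf
  simp only [expand]
  rw [Finset.sum_comm]
  have inner : ∀ j ∈ Finset.Icc (-(N:ℤ)) (N:ℤ),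
      (∑ m ∈ Finset.range (2*N+1), c j * ek (j-k) (2*Real.pi*m/(2*N+1)))
      = if j = k then c j * (((2*N+1:ℕ):ℝ):ℂ) else 0 := by
    intro j hj
    rw [← Finset.mul_sum]
    by_cases h : j = k
    · subst h
      simp only [sub_self, if_true]
      simp [ek_zero, Finset.sum_const, Finset.card_range]
    · have h1 : j - k ≠ 0 := fun hc => h (by omega)
      simp only [Finset.mem_Icc] at hj hk
      have h2 : (j-k).natAbs < 2*N+1 := by omega
      have hcast : ∀ m : ℕ, (((2*N+1:ℕ):ℝ)) = (((2*N+1:ℕ):ℝ)) := fun _ => rfl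
      rw [show ∑ m ∈ Finset.range (2*N+1), ek (j-k) (2*Real.pi*m/(2*N+1))
          = ∑ m ∈ Finset.range (2*N+1), ek (j-k) (2*Real.pi*m/((2*N+1:ℕ):ℝ)) by
        refine Finset.sum_congr rfl fun m _ => ?_
        norm_num]
      rw [sum_ek_sample (by omega) h1 h2]
      simp [h]
  rw [Finset.sum_congr rfl inner, Finset.sum_ite_eq' _ k, if_pos hk]
  field_simp

lemma hasDerivAt_tp (N : ℕ) (c : ℤ → ℂ) (x : ℝ) :
    HasDerivAt (fun y : ℝ => ∑ j ∈ Finset.Icc (-(N:ℤ)) (N:ℤ), c j * ek j y)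
      (∑ j ∈ Finset.Icc (-(N:ℤ)) (N:ℤ), c j * (Complex.I * j * ek j x)) x :=
  HasDerivAt.fun_sum fun j _ => (hasDerivAt_ek j x).const_mul (c j)

lemma hasDerivAt_SN (N : ℕ) (f : ℝ → ℂ) (x : ℝ) :
    HasDerivAt (fun y : ℝ => SN N f y)
      (∑ j ∈ Finset.Icc (-(N:ℤ)) (N:ℤ), fc f j * (Complex.I * j * ek j x)) x :=
  hasDerivAt_tp N (fc f) x

lemma deriv_SN (N : ℕ) (f : ℝ → ℂ) (x : ℝ) :
    deriv (fun y : ℝ => SN N f y) x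
      = ∑ j ∈ Finset.Icc (-(N:ℤ)) (N:ℤ), fc f j * (Complex.I * j * ek j x) :=
  (hasDerivAt_SN N f x).deriv

/-- **L²-stability of the spectral method for a linear hyperbolic equation.**
If the `N`-degree trigonometric polynomial `u(·,t)` solves `∂_t u + ∂_x S_N[q(x) u] = 0`
on the circle, with `q ∈ C¹` and `2π`-periodic, then
`‖u(·,t)‖² ≤ e^{q'_∞ t} ‖u(·,0)‖²` with `q'_∞ = max_x |q'(x)|`. -/
theorem stmt_4 (N : ℕ) (q : ℝ → ℝ) (u : ℝ → ℝ → ℂ)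
    (hq : ContDiff ℝ 1 q) (hqper : Function.Periodic q (2 * Real.pi))
    (hpoly : ∀ t : ℝ, IsTrigPoly N (u t))
    (hpde : ∀ t x : ℝ, HasDerivAt (fun τ => u τ x)
        (-(deriv (fun y => SN N (fun z => (q z : ℂ) * u t z) y) x)) t)
    (t : ℝ) (ht : 0 ≤ t) :
    (∫ x in (0 : ℝ)..(2 * Real.pi), ‖u t x‖ ^ 2)
      ≤ Real.exp ((⨆ x : ℝ, |deriv q x|) * t) * ∫ x in (0 : ℝ)..(2 * Real.pi), ‖u 0 x‖ ^ 2 := by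
  classical
  set S := Finset.Icc (-(N:ℤ)) (N:ℤ) with hS
  set pt : ℕ → ℝ := fun m => 2*Real.pi*(m:ℝ)/(2*(N:ℝ)+1) with hpt
  set c : ℝ → ℤ → ℂ := fun s k =>
    (1/(((2*N+1:ℕ):ℝ):ℂ)) * ∑ m ∈ Finset.range (2*N+1), u s (pt m) * ek (-k) (pt m) with hc
  set b : ℝ → ℤ → ℂ := fun s k =>
    -(fc (fun z => (q z:ℂ) * u s z) k * (Complex.I * (k:ℂ))) with hb
  -- representation of u s by the DFT coefficients
  have hrep : ∀ s : ℝ, ∀ x : ℝ, u s x = ∑ j ∈ S, c s j * ek j x := by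
    intro s
    obtain ⟨d, hd⟩ := hpoly s
    have hd' : ∀ x : ℝ, u s x = ∑ j ∈ S, d j * ek j x := hd
    have hdc : ∀ k ∈ S, c s k = d k := by
      intro k hk
      rw [hc]
      simp only [hd']
      exact dft N d hk
    intro x
    rw [hd' x]
    exact (Finset.sum_congr rfl fun j hj => by rw [hdc j hj]).symm
  -- derivative in space of SN (q u s) is a trig poly with coefficients b s
  have hD : ∀ s x : ℝ, -(deriv (fun y => SN N (fun z => (q z : ℂ) * u s z) y) x)
      = ∑ j ∈ S, b s j * ek j x := by
    intro s x
    rw [deriv_SN, ← Finset.sum_neg_distrib]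
    exact Finset.sum_congr rfl fun j _ => by rw [hb]; ring
  -- coefficients are differentiable in time
  have hcderiv : ∀ s : ℝ, ∀ k ∈ S, HasDerivAt (fun τ => c τ k) (b s k) s := by
    intro s k hk
    have h1 : HasDerivAt
        (fun τ => (1/(((2*N+1:ℕ):ℝ):ℂ)) * ∑ m ∈ Finset.range (2*N+1), u τ (pt m) * ek (-k) (pt m))
        ((1/(((2*N+1:ℕ):ℝ):ℂ)) * ∑ m ∈ Finset.range (2*N+1),
          (-(deriv (fun y => SN N (fun z => (q z : ℂ) * u s z) y) (pt m))) * ek (-k) (pt m)) s :=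
      (HasDerivAt.fun_sum fun m _ => (hpde s (pt m)).mul_const _).const_mul _
    have h2 : (1/(((2*N+1:ℕ):ℝ):ℂ)) * ∑ m ∈ Finset.range (2*N+1),
        (-(deriv (fun y => SN N (fun z => (q z : ℂ) * u s z) y) (pt m))) * ek (-k) (pt m)
        = b s k := by
      simp only [hD s]
      exact dft N (b s) hk
    rw [h2] at h1
    exact h1
  -- the energy
  set E : ℝ → ℝ := fun s => 2 * Real.pi * ∑ k ∈ S, Complex.normSq (c s k) with hE
  have hE_eq : ∀ s : ℝ, (∫ x in (0:ℝ)..(2*Real.pi), ‖u s x‖ ^ 2) = E s := by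
    intro s
    rw [hE]
    simp only [hrep s]
    exact parseval_trig N (c s)
  have hEnonneg : ∀ s : ℝ, 0 ≤ E s := by
    intro s
    rw [hE]
    have : (0:ℝ) ≤ ∑ k ∈ S, Complex.normSq (c s k) :=
      Finset.sum_nonneg fun k _ => Complex.normSq_nonneg _
    positivity
  have hEderiv0 : ∀ s : ℝ, HasDerivAt E
      (2 * Real.pi * ∑ k ∈ S, 2 * ((b s k) * (starRingEnd ℂ) (c s k)).re) s := by
    intro s
    rw [hE]
    refine HasDerivAt.const_mul _ (HasDerivAt.fun_sum fun k hk => ?_)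
    have hck := hcderiv s k hk
    have hre : HasDerivAt (fun τ => (c τ k).re) ((b s k).re) s :=
      Complex.reCLM.hasFDerivAt.comp_hasDerivAt s hck
    have him : HasDerivAt (fun τ => (c τ k).im) ((b s k).im) s :=
      Complex.imCLM.hasFDerivAt.comp_hasDerivAt s hck
    have h3 : HasDerivAt (fun τ => (c τ k).re * (c τ k).re + (c τ k).im * (c τ k).im)
        ((b s k).re * (c s k).re + (c s k).re * (b s k).re
          + ((b s k).im * (c s k).im + (c s k).im * (b s k).im)) s := (hre.mul hre).add (him.mul him)
    have h4 : (fun τ => Complex.normSq (c τ k))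
        = fun τ => (c τ k).re * (c τ k).re + (c τ k).im * (c τ k).im := by
      funext τ; rw [Complex.normSq_apply]
    rw [h4]
    refine h3.congr_deriv ?_
    simp [Complex.mul_re, Complex.conj_re, Complex.conj_im]
    ring
  -- the key identity
  have hpi2 : (0:ℝ) < 2 * Real.pi := by positivity
  have hcontu : ∀ s : ℝ, Continuous (u s) := by
    intro s
    have : (u s) = fun x => ∑ j ∈ S, c s j * ek j x := funext (hrep s)
    rw [this, hS]
    exact tp_continuous N (c s)
  have hA : ∀ s : ℝ, 2 * Real.pi * ∑ k ∈ S, 2 * ((b s k) * (starRingEnd ℂ) (c s k)).re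
      = -∫ x in (0:ℝ)..(2*Real.pi), deriv q x * ‖u s x‖ ^ 2 := by
    intro s
    set ux : ℝ → ℂ := fun y => ∑ k ∈ S, c s k * (Complex.I * k * ek k y) with huxdef
    have hux : ∀ y : ℝ, HasDerivAt (u s) (ux y) y := by
      intro y
      have h := hasDerivAt_tp N (c s) y
      rw [← hS] at h
      have heq : (fun z : ℝ => ∑ j ∈ S, c s j * ek j z) = u s := funext fun z => (hrep s z).symm
      rw [heq] at h
      exact h
    have hcontux : Continuous ux := by
      rw [huxdef]
      exact continuous_finset_sum _ fun k _ =>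
        continuous_const.mul (continuous_const.mul (continuous_ek k))
    have hcontq : Continuous q := hq.continuous
    have hcontg : Continuous (fun y : ℝ => (q y : ℂ) * u s y) :=
      (Complex.continuous_ofReal.comp hcontq).mul (hcontu s)
    -- step 1 : complex identity
    have hfc2 : ∀ k : ℤ, ((2*Real.pi:ℝ):ℂ) * fc (fun z => (q z:ℂ) * u s z) k
        = ∫ y in (0:ℝ)..(2*Real.pi), (q y:ℂ) * u s y * ek (-k) y := by
      intro k
      rw [fc]
      simp only [neg_exp_eq_ek]
      rw [Complex.real_smul, ← mul_assoc]
      rw [show ((2*Real.pi:ℝ):ℂ) * ((1/(2*Real.pi):ℝ):ℂ) = 1 by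
        rw [← Complex.ofReal_mul, mul_one_div, div_self (ne_of_gt hpi2), Complex.ofReal_one]]
      rw [one_mul]
    have hcomplex : ((2*Real.pi:ℝ):ℂ) * ∑ k ∈ S, b s k * (starRingEnd ℂ) (c s k)
        = ∫ y in (0:ℝ)..(2*Real.pi), (q y:ℂ) * u s y * (starRingEnd ℂ) (ux y) := by
      have hint : ∀ y : ℝ, (q y:ℂ) * u s y * (starRingEnd ℂ) (ux y)
          = ∑ k ∈ S, (-(Complex.I * (k:ℂ)) * (starRingEnd ℂ) (c s k))
              * ((q y:ℂ) * u s y * ek (-k) y) := by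
        intro y
        rw [huxdef]
        simp only [map_sum, map_mul, conj_ek, Complex.conj_I, map_intCast, Finset.mul_sum]
        refine Finset.sum_congr rfl fun k _ => ?_
        ring
      simp only [hint]
      rw [intervalIntegral.integral_finset_sum (fun k _ =>
        (continuous_const.fun_mul ((hcontg.fun_mul (continuous_ek (-k))))).intervalIntegrable _ _)]
      rw [Finset.mul_sum]
      refine Finset.sum_congr rfl fun k _ => ?_
      rw [intervalIntegral.integral_const_mul, ← hfc2 k, hb]
      ring
    -- step 2 : real parts
    have hstep2 : 2 * Real.pi * ∑ k ∈ S, 2 * ((b s k) * (starRingEnd ℂ) (c s k)).re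
        = ∫ y in (0:ℝ)..(2*Real.pi), 2 * ((q y:ℂ) * u s y * (starRingEnd ℂ) (ux y)).re := by
      have h1 : (∫ y in (0:ℝ)..(2*Real.pi), 2 * ((q y:ℂ) * u s y * (starRingEnd ℂ) (ux y)).re)
          = 2 * (∫ y in (0:ℝ)..(2*Real.pi), (q y:ℂ) * u s y * (starRingEnd ℂ) (ux y)).re := by
        have hint2 : IntervalIntegrable (fun y : ℝ => (q y:ℂ) * u s y * (starRingEnd ℂ) (ux y))
            MeasureTheory.volume 0 (2*Real.pi) :=
          (hcontg.mul (Complex.continuous_conj.comp hcontux)).intervalIntegrable _ _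
        rw [intervalIntegral.integral_const_mul, re_intervalIntegral hint2]
      rw [h1, ← hcomplex]
      rw [show (((2*Real.pi:ℝ):ℂ) * ∑ k ∈ S, b s k * (starRingEnd ℂ) (c s k)).re
          = (2*Real.pi) * (∑ k ∈ S, b s k * (starRingEnd ℂ) (c s k)).re by
        simp [Complex.mul_re]]
      rw [Complex.re_sum, Finset.mul_sum, Finset.mul_sum, Finset.mul_sum]
      exact Finset.sum_congr rfl fun k _ => by ring
    -- step 3 : pointwise, 2 Re (q u conj ux) = q * (normSq ∘ u)'
    set G : ℝ → ℝ := fun y => Complex.normSq (u s y) with hGdef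
    set G' : ℝ → ℝ := fun y => 2 * ((ux y) * (starRingEnd ℂ) (u s y)).re with hG'def
    have hpoint : ∀ y : ℝ, 2 * ((q y:ℂ) * u s y * (starRingEnd ℂ) (ux y)).re = q y * G' y := by
      intro y
      rw [hG'def]
      simp only [Complex.mul_re, Complex.mul_im, Complex.ofReal_re, Complex.ofReal_im,
        Complex.conj_re, Complex.conj_im]
      ring
    have hG : ∀ y : ℝ, HasDerivAt G (G' y) y := by
      intro y
      have hre : HasDerivAt (fun z => (u s z).re) ((ux y).re) y :=
        Complex.reCLM.hasFDerivAt.comp_hasDerivAt y (hux y)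
      have him : HasDerivAt (fun z => (u s z).im) ((ux y).im) y :=
        Complex.imCLM.hasFDerivAt.comp_hasDerivAt y (hux y)
      have h3 := (hre.fun_mul hre).fun_add (him.fun_mul him)
      have h4 : G = fun z => (u s z).re * (u s z).re + (u s z).im * (u s z).im :=
        funext fun z => Complex.normSq_apply _
      rw [h4]
      refine h3.congr_deriv ?_
      rw [hG'def]
      simp only [Complex.mul_re, Complex.conj_re, Complex.conj_im]
      ring
    have hcontG : Continuous G := Complex.continuous_normSq.comp (hcontu s)
    have hcontG' : Continuous G' := by
      rw [hG'def]
      exact continuous_const.mul (Complex.continuous_re.comp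
        (hcontux.mul (Complex.continuous_conj.comp (hcontu s))))
    have hcontq' : Continuous (deriv q) := hq.continuous_deriv le_rfl
    -- step 4 : integration by parts
    have hqd : ∀ y : ℝ, HasDerivAt q (deriv q y) y :=
      fun y => ((hq.differentiable one_ne_zero) y).hasDerivAt
    have hFD : ∀ y ∈ Set.uIcc (0:ℝ) (2*Real.pi), HasDerivAt (fun z => q z * G z)
        (deriv q y * G y + q y * G' y) y := fun y _ => (hqd y).mul (hG y)
    have hzero : (∫ y in (0:ℝ)..(2*Real.pi), (deriv q y * G y + q y * G' y)) = 0 := by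
      rw [intervalIntegral.integral_eq_sub_of_hasDerivAt hFD
        (((hcontq'.mul hcontG).add (hcontq.mul hcontG')).intervalIntegrable _ _)]
      have hGper : G (2*Real.pi) = G 0 := by
        rw [hGdef]
        have : u s (2*Real.pi) = u s 0 := by
          rw [hrep s, hrep s]
          refine Finset.sum_congr rfl fun j _ => ?_
          have := ek_period j 0
          rw [zero_add] at this
          rw [this]
        simp only [this]
      have hqper2 : q (2*Real.pi) = q 0 := by
        have := hqper 0
        rwa [zero_add] at this
      rw [hGper, hqper2]
      ring
    have hsplit : (∫ y in (0:ℝ)..(2*Real.pi), q y * G' y)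
        = -∫ y in (0:ℝ)..(2*Real.pi), deriv q y * G y := by
      have hadd := intervalIntegral.integral_add (μ := MeasureTheory.volume)
        (f := fun y => deriv q y * G y) (g := fun y => q y * G' y) (a := 0) (b := 2*Real.pi)
        ((hcontq'.mul hcontG).intervalIntegrable _ _)
        ((hcontq.mul hcontG').intervalIntegrable _ _)
      rw [hzero] at hadd
      linarith
    -- put it together
    rw [hstep2]
    simp only [hpoint]
    rw [hsplit]
    congr 1
    refine intervalIntegral.integral_congr fun y _ => ?_
    have hnn : ‖u s y‖^2 = G y := by
      rw [Complex.sq_norm]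
    rw [hnn]
  -- the sup of |q'|
  have hpi2b : (0:ℝ) < 2 * Real.pi := by positivity
  have hcontq'g : Continuous (deriv q) := hq.continuous_deriv le_rfl
  have hq'per : ∀ x : ℝ, deriv q (x + 2*Real.pi) = deriv q x := by
    intro x
    have h1 : (fun y : ℝ => q (y + 2*Real.pi)) = q := funext hqper
    calc deriv q (x + 2*Real.pi) = deriv (fun y : ℝ => q (y + 2*Real.pi)) x :=
          (deriv_comp_add_const q (2*Real.pi) x).symm
    _ = deriv q x := by rw [h1]
  have habs_per : Function.Periodic (fun x => |deriv q x|) (2*Real.pi) := fun x => by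
    show |deriv q (x + 2*Real.pi)| = |deriv q x|
    rw [hq'per x]
  have hbdd : BddAbove (Set.range fun x => |deriv q x|) := by
    rw [← habs_per.image_Icc hpi2b 0]
    exact (isCompact_Icc.image (continuous_abs.comp hcontq'g)).bddAbove
  set Kc : ℝ := ⨆ x : ℝ, |deriv q x| with hKc
  have hKle : ∀ x : ℝ, |deriv q x| ≤ Kc := fun x => le_ciSup hbdd x
  have hK0 : 0 ≤ Kc := (abs_nonneg _).trans (hKle 0)
  -- the derivative of the energy
  set E' : ℝ → ℝ := fun s => -∫ x in (0:ℝ)..(2*Real.pi), deriv q x * ‖u s x‖ ^ 2 with hE'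
  have hEd : ∀ s : ℝ, HasDerivAt E (E' s) s := by
    intro s
    have := hEderiv0 s
    rwa [hA s] at this
  -- the bound |E'| ≤ Kc * E
  have hbound : ∀ s : ℝ, |E' s| ≤ Kc * E s := by
    intro s
    have hcu : Continuous fun x => ‖u s x‖ ^ 2 := ((hcontu s).norm).pow 2
    have h1 : |E' s| = |∫ x in (0:ℝ)..(2*Real.pi), deriv q x * ‖u s x‖ ^ 2| := by
      rw [hE', abs_neg]
    have h2 : |∫ x in (0:ℝ)..(2*Real.pi), deriv q x * ‖u s x‖ ^ 2|
        ≤ ∫ x in (0:ℝ)..(2*Real.pi), |deriv q x * ‖u s x‖ ^ 2| :=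
      intervalIntegral.abs_integral_le_integral_abs hpi2b.le
    have h3 : (∫ x in (0:ℝ)..(2*Real.pi), |deriv q x * ‖u s x‖ ^ 2|)
        ≤ ∫ x in (0:ℝ)..(2*Real.pi), Kc * ‖u s x‖ ^ 2 := by
      refine intervalIntegral.integral_mono_on hpi2b.le
        ((continuous_abs.comp (hcontq'g.mul hcu)).intervalIntegrable _ _)
        ((continuous_const.mul hcu).intervalIntegrable _ _) fun x _ => ?_
      rw [abs_mul, _root_.abs_of_nonneg (by positivity : (0:ℝ) ≤ ‖u s x‖ ^ 2)]
      exact mul_le_mul_of_nonneg_right (hKle x) (by positivity)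
    have h4 : (∫ x in (0:ℝ)..(2*Real.pi), Kc * ‖u s x‖ ^ 2) = Kc * E s := by
      rw [intervalIntegral.integral_const_mul, hE_eq s]
    calc |E' s| = _ := h1
    _ ≤ _ := h2
    _ ≤ _ := h3
    _ = Kc * E s := h4
  -- Gronwall
  have hgron := norm_le_gronwallBound_of_norm_deriv_right_le (a := 0) (b := t)
    (f := E) (f' := E') (δ := E 0) (K := Kc) (ε := 0)
    (fun x _ => (hEd x).continuousAt.continuousWithinAt)
    (fun x _ => (hEd x).hasDerivWithinAt)
    (le_of_eq (Real.norm_of_nonneg (hEnonneg 0)))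
    (fun x _ => by
      rw [Real.norm_eq_abs, Real.norm_eq_abs, _root_.abs_of_nonneg (hEnonneg x), add_zero]
      exact hbound x)
    t (Set.mem_Icc.2 ⟨ht, le_refl t⟩)
  rw [gronwallBound_ε0, sub_zero, Real.norm_eq_abs, _root_.abs_of_nonneg (hEnonneg t)] at hgron
  rw [hE_eq t, hE_eq 0]
  calc E t ≤ E 0 * Real.exp (Kc * t) := hgron
  _ = Real.exp (Kc * t) * E 0 := mul_comm _ _
end

section
/- Total entropy conservation for the spectral approximation of the 1D isentropic Lagrangian equations: if the N-degree trigonometric polynomials (u_N, v_N) solve ∂_t u_N + ∂_x S_N q(v_N) = 0, ∂_t v_N + ∂_x u_N = 0 on the circle with q' > 0, then d/dt ∫ ( |u_N|²/2 + Q(v_N) ) dx = 0, where Q' = q. -/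
open Complex Finset intervalIntegral MeasureTheory

set_option maxHeartbeats 1000000

section helpers

lemma abs_exp_ilx (l : ℤ) (x : ℝ) : ‖Complex.exp (Complex.I * (l:ℂ) * (x:ℂ))‖ = 1 := by
  rw [Complex.norm_exp]
  simp [Complex.mul_re, Complex.mul_im]

lemma integral_exp_int (m : ℤ) :
    ∫ x in (0:ℝ)..(2*Real.pi), Complex.exp (Complex.I * (m:ℂ) * (x:ℂ))
      = if m = 0 then ((2*Real.pi : ℝ) : ℂ) else 0 := by
  by_cases hm : m = 0
  · simp [hm]
  · rw [if_neg hm]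
    have hc : Complex.I * (m:ℂ) ≠ 0 := by
      simp [Complex.I_ne_zero, hm]
    rw [integral_exp_mul_complex hc]
    have h2 : Complex.I * (m:ℂ) * ((2*Real.pi : ℝ):ℂ) = (m:ℂ) * (2 * Real.pi * Complex.I) := by
      push_cast; ring
    rw [h2, Complex.exp_int_mul_two_pi_mul_I]
    simp

lemma sum_exp_dft (M : ℕ) (hM : 0 < M) (m : ℤ) (hm0 : m ≠ 0) (hm : m.natAbs < M) :
    ∑ j ∈ Finset.range M, Complex.exp (Complex.I * (m:ℂ) * ((2*Real.pi*j/M : ℝ):ℂ)) = 0 := by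
  set z : ℂ := Complex.exp (Complex.I * (m:ℂ) * ((2*Real.pi/M : ℝ):ℂ)) with hz
  have hterm : ∀ j ∈ Finset.range M,
      Complex.exp (Complex.I * (m:ℂ) * ((2*Real.pi*j/M : ℝ):ℂ)) = z ^ j := by
    intro j _
    rw [hz, ← Complex.exp_nat_mul]
    congr 1
    push_cast; ring
  rw [Finset.sum_congr rfl hterm]
  have hMne : (M:ℂ) ≠ 0 := by exact_mod_cast hM.ne'
  have hz1 : z ≠ 1 := by
    intro h
    rw [hz, Complex.exp_eq_one_iff] at h
    obtain ⟨n, hn⟩ := h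
    have key : (m : ℂ) = n * M := by
      have hpi : (Real.pi : ℂ) ≠ 0 := by exact_mod_cast Real.pi_ne_zero
      push_cast at hn
      field_simp at hn
      have hc2 : (2 * (Real.pi:ℂ) * Complex.I) ≠ 0 :=
        mul_ne_zero (mul_ne_zero two_ne_zero hpi) Complex.I_ne_zero
      apply mul_right_cancel₀ hc2
      linear_combination (2 * (Real.pi:ℂ) * Complex.I) * hn
    have hmZ : m = n * M := by exact_mod_cast key
    have h1 : m.natAbs = n.natAbs * M := by
      rw [hmZ, Int.natAbs_mul, Int.natAbs_natCast]
    rcases Nat.eq_zero_or_pos n.natAbs with h0 | h0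
    · rw [h0, Nat.zero_mul] at h1
      exact hm0 (Int.natAbs_eq_zero.mp h1)
    · have h2 : M ≤ n.natAbs * M := Nat.le_mul_of_pos_left M h0
      omega
  rw [geom_sum_eq hz1]
  have hzM : z ^ M = 1 := by
    rw [hz, ← Complex.exp_nat_mul]
    have : (M:ℂ) * (Complex.I * (m:ℂ) * ((2*Real.pi/M : ℝ):ℂ)) = (m:ℂ) * (2*Real.pi*Complex.I) := by
      push_cast
      field_simp
    rw [this, Complex.exp_int_mul_two_pi_mul_I]
  rw [hzM]
  simp

lemma hasDerivAt_trig (c : ℤ → ℂ) (s : Finset ℤ) (x : ℝ) :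
    HasDerivAt (fun y : ℝ => ∑ l ∈ s, c l * Complex.exp (Complex.I * (l:ℂ) * (y:ℂ)))
      (∑ l ∈ s, c l * (Complex.I * (l:ℂ)) * Complex.exp (Complex.I * (l:ℂ) * (x:ℂ))) x := by
  apply HasDerivAt.fun_sum
  intro l _
  have h1 : HasDerivAt (fun y : ℝ => Complex.I * (l:ℂ) * (y:ℂ)) (Complex.I * (l:ℂ)) x := by
    simpa using (Complex.ofRealCLM.hasDerivAt (x := x)).const_mul (Complex.I * (l:ℂ))
  have h2 := (h1.cexp).const_mul (c l)
  exact h2.congr_deriv (by ring)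

lemma continuous_trig (c : ℤ → ℂ) (s : Finset ℤ) :
    Continuous (fun y : ℝ => ∑ l ∈ s, c l * Complex.exp (Complex.I * (l:ℂ) * (y:ℂ))) :=
  continuous_finset_sum _ fun l _ =>
    continuous_const.mul (Complex.continuous_exp.comp
      (continuous_const.mul Complex.continuous_ofReal))

lemma cont_term (c : ℂ) (m : ℤ) :
    Continuous (fun x : ℝ => c * Complex.exp (Complex.I * (m:ℂ) * (x:ℂ))) :=
  continuous_const.mul (Complex.continuous_exp.comp
    (continuous_const.mul Complex.continuous_ofReal))

lemma dft_recover {N : ℕ} {f : ℝ → ℂ} {c : ℤ → ℂ}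
    (hf : ∀ x : ℝ, f x = ∑ l ∈ Finset.Icc (-(N:ℤ)) (N:ℤ),
      c l * Complex.exp (Complex.I * (l:ℂ) * (x:ℂ)))
    {k : ℤ} (hk : k ∈ Finset.Icc (-(N:ℤ)) (N:ℤ)) :
    (1/((2*N+1 : ℕ):ℂ)) * ∑ j ∈ Finset.range (2*N+1),
      f ((2*Real.pi*j/((2*N+1:ℕ)) : ℝ)) *
        Complex.exp (-(Complex.I * (k:ℂ) * ((2*Real.pi*j/((2*N+1:ℕ)) : ℝ):ℂ))) = c k := by
  set M : ℕ := 2*N+1 with hM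
  have hMpos : 0 < M := by omega
  have hstep : ∀ j ∈ Finset.range M,
      f ((2*Real.pi*j/M : ℝ)) * Complex.exp (-(Complex.I * (k:ℂ) * ((2*Real.pi*j/M : ℝ):ℂ)))
        = ∑ l ∈ Finset.Icc (-(N:ℤ)) (N:ℤ),
            c l * Complex.exp (Complex.I * ((l - k : ℤ):ℂ) * ((2*Real.pi*j/M : ℝ):ℂ)) := by
    intro j _
    rw [hf, Finset.sum_mul]
    refine Finset.sum_congr rfl fun l _ => ?_
    rw [mul_assoc, ← Complex.exp_add]
    congr 2
    push_cast; ring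
  rw [Finset.sum_congr rfl hstep, Finset.sum_comm]
  have hinner : ∀ l ∈ Finset.Icc (-(N:ℤ)) (N:ℤ),
      ∑ j ∈ Finset.range M,
          c l * Complex.exp (Complex.I * ((l - k : ℤ):ℂ) * ((2*Real.pi*j/M : ℝ):ℂ))
        = if l = k then c l * M else 0 := by
    intro l hl
    rw [← Finset.mul_sum]
    by_cases hlk : l = k
    · subst hlk
      simp
    · rw [if_neg hlk, sum_exp_dft M hMpos (l - k) (sub_ne_zero.mpr hlk) ?_, mul_zero]
      simp only [Finset.mem_Icc] at hl hk
      omega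
  rw [Finset.sum_congr rfl hinner, Finset.sum_ite_eq' _ k, if_pos hk]
  have hMne : ((M:ℕ):ℂ) ≠ 0 := by exact_mod_cast hMpos.ne'
  field_simp

end helpers

section helpers2

lemma integral_trig_mul {N : ℕ} (a d : ℤ → ℂ) :
    ∫ x in (0:ℝ)..(2*Real.pi),
      (∑ k ∈ Finset.Icc (-(N:ℤ)) (N:ℤ), a k * Complex.exp (Complex.I * (k:ℂ) * (x:ℂ))) *
      (∑ l ∈ Finset.Icc (-(N:ℤ)) (N:ℤ), d l * Complex.exp (Complex.I * (l:ℂ) * (x:ℂ)))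
    = ((2*Real.pi:ℝ):ℂ) * ∑ k ∈ Finset.Icc (-(N:ℤ)) (N:ℤ), a k * d (-k) := by
  have hstep : ∀ x : ℝ,
      (∑ k ∈ Finset.Icc (-(N:ℤ)) (N:ℤ), a k * Complex.exp (Complex.I * (k:ℂ) * (x:ℂ))) *
      (∑ l ∈ Finset.Icc (-(N:ℤ)) (N:ℤ), d l * Complex.exp (Complex.I * (l:ℂ) * (x:ℂ)))
      = ∑ k ∈ Finset.Icc (-(N:ℤ)) (N:ℤ), ∑ l ∈ Finset.Icc (-(N:ℤ)) (N:ℤ),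
          (a k * d l) * Complex.exp (Complex.I * ((k+l : ℤ):ℂ) * (x:ℂ)) := by
    intro x
    rw [Finset.sum_mul_sum]
    refine Finset.sum_congr rfl fun k _ => Finset.sum_congr rfl fun l _ => ?_
    rw [show a k * Complex.exp (Complex.I * (k:ℂ) * (x:ℂ)) *
          (d l * Complex.exp (Complex.I * (l:ℂ) * (x:ℂ)))
        = (a k * d l) * (Complex.exp (Complex.I * (k:ℂ) * (x:ℂ)) *
            Complex.exp (Complex.I * (l:ℂ) * (x:ℂ))) by ring, ← Complex.exp_add]
    congr 2
    push_cast; ring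
  rw [intervalIntegral.integral_congr (g := fun x => ∑ k ∈ Finset.Icc (-(N:ℤ)) (N:ℤ),
        ∑ l ∈ Finset.Icc (-(N:ℤ)) (N:ℤ),
          (a k * d l) * Complex.exp (Complex.I * ((k+l : ℤ):ℂ) * (x:ℂ)))
      (fun x _ => hstep x)]
  have hint : ∀ (m : ℤ) (c : ℂ), IntervalIntegrable
      (fun x : ℝ => c * Complex.exp (Complex.I * (m:ℂ) * (x:ℂ))) MeasureTheory.volume 0 (2*Real.pi) := by
    intro m c
    exact (cont_term c m).intervalIntegrable _ _
  rw [intervalIntegral.integral_finset_sum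
    (f := fun k x => ∑ l ∈ Finset.Icc (-(N:ℤ)) (N:ℤ),
      (a k * d l) * Complex.exp (Complex.I * ((k+l : ℤ):ℂ) * (x:ℂ)))
    (fun k _ => (continuous_finset_sum _ fun l (_ : l ∈ Finset.Icc (-(N:ℤ)) (N:ℤ)) =>
      cont_term (a k * d l) (k+l)).intervalIntegrable _ _)]
  have : ∀ k ∈ Finset.Icc (-(N:ℤ)) (N:ℤ),
      (∫ x in (0:ℝ)..(2*Real.pi), ∑ l ∈ Finset.Icc (-(N:ℤ)) (N:ℤ),
        (a k * d l) * Complex.exp (Complex.I * ((k+l : ℤ):ℂ) * (x:ℂ)))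
      = ((2*Real.pi:ℝ):ℂ) * (a k * d (-k)) := by
    intro k hk
    rw [intervalIntegral.integral_finset_sum
      (f := fun l x => (a k * d l) * Complex.exp (Complex.I * ((k+l : ℤ):ℂ) * (x:ℂ)))
      (fun l _ => hint (k+l) (a k * d l))]
    have hterm : ∀ l ∈ Finset.Icc (-(N:ℤ)) (N:ℤ),
        (∫ x in (0:ℝ)..(2*Real.pi), (a k * d l) * Complex.exp (Complex.I * ((k+l : ℤ):ℂ) * (x:ℂ)))
        = if l = -k then (a k * d l) * ((2*Real.pi:ℝ):ℂ) else 0 := by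
      intro l _
      rw [intervalIntegral.integral_const_mul, integral_exp_int]
      by_cases h : l = -k
      · rw [if_pos h, if_pos (by omega)]
      · rw [if_neg h, if_neg (by omega), mul_zero]
    rw [Finset.sum_congr rfl hterm, Finset.sum_ite_eq' _ (-k), if_pos (by
      simp only [Finset.mem_Icc] at hk ⊢; omega)]
    ring
  rw [Finset.sum_congr rfl this, Finset.mul_sum]

lemma integral_mul_exp (g : ℝ → ℂ) (l : ℤ) :
    ∫ x in (0:ℝ)..(2*Real.pi), g x * Complex.exp (Complex.I * (l:ℂ) * (x:ℂ))
      = (2*Real.pi : ℝ) • fc g (-l) := by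
  rw [fc, smul_smul]
  have h2π : (2*Real.pi) * (1/(2*Real.pi)) = 1 := by
    field_simp
  rw [h2π, one_smul]
  refine intervalIntegral.integral_congr fun x _ => ?_
  congr 2
  push_cast; ring

end helpers2

/-- **Total entropy conservation for the spectral approximation of the 1D
isentropic Lagrangian equations.** If the real-valued `N`-degree trigonometric polynomials
`(u_N, v_N)` solve `∂_t u_N + ∂_x S_N q(v_N) = 0`, `∂_t v_N + ∂_x u_N = 0` on the circle
with `q' > 0`, then `d/dt ∫ (|u_N|²/2 + Q(v_N)) dx = 0`, where `Q' = q`. -/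
theorem stmt_19 (N : ℕ) (q q' Q : ℝ → ℝ)
    (hq : ∀ y, HasDerivAt q (q' y) y) (hq'pos : ∀ y, 0 < q' y)
    (hQ : ∀ y, HasDerivAt Q (q y) y)
    (uN vN : ℝ → ℝ → ℂ)
    (hureal : ∀ t x, (uN t x).im = 0) (hvreal : ∀ t x, (vN t x).im = 0)
    (hupoly : ∀ t, IsTrigPoly N (uN t)) (hvpoly : ∀ t, IsTrigPoly N (vN t))
    (hpde1 : ∀ t x, HasDerivAt (fun τ => uN τ x)
        (-(deriv (fun y => SN N (fun z => ((q ((vN t z).re) : ℝ) : ℂ)) y) x)) t)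
    (hpde2 : ∀ t x, HasDerivAt (fun τ => vN τ x)
        (-(deriv (fun y => uN t y) x)) t)
    (t : ℝ) :
    HasDerivAt (fun τ => ∫ x in (0 : ℝ)..(2 * Real.pi),
        (‖uN τ x‖ ^ 2 / 2 + Q ((vN τ x).re))) 0 t := by
  classical
  -- notation
  set Ic : Finset ℤ := Finset.Icc (-(N:ℤ)) (N:ℤ) with hIc
  set gf : ℝ → ℝ → ℂ := fun τ z => ((q ((vN τ z).re) : ℝ) : ℂ) with hgf
  -- coefficients of uN and vN recovered by DFT
  set a : ℤ → ℝ → ℂ := fun k τ => (1/((2*N+1 : ℕ):ℂ)) * ∑ j ∈ Finset.range (2*N+1),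
      uN τ ((2*Real.pi*j/((2*N+1:ℕ)) : ℝ)) *
        Complex.exp (-(Complex.I * (k:ℂ) * ((2*Real.pi*j/((2*N+1:ℕ)) : ℝ):ℂ))) with ha_def
  set b : ℤ → ℝ → ℂ := fun k τ => (1/((2*N+1 : ℕ):ℂ)) * ∑ j ∈ Finset.range (2*N+1),
      vN τ ((2*Real.pi*j/((2*N+1:ℕ)) : ℝ)) *
        Complex.exp (-(Complex.I * (k:ℂ) * ((2*Real.pi*j/((2*N+1:ℕ)) : ℝ):ℂ))) with hb_def
  have repr_u : ∀ τ x, uN τ x = ∑ k ∈ Ic, a k τ * Complex.exp (Complex.I * (k:ℂ) * (x:ℂ)) := by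
    intro τ x
    obtain ⟨c, hc⟩ := hupoly τ
    rw [hc x]
    exact (Finset.sum_congr rfl fun k hk => by rw [show a k τ = c k from dft_recover hc hk]).symm
  have repr_v : ∀ τ x, vN τ x = ∑ k ∈ Ic, b k τ * Complex.exp (Complex.I * (k:ℂ) * (x:ℂ)) := by
    intro τ x
    obtain ⟨c, hc⟩ := hvpoly τ
    rw [hc x]
    exact (Finset.sum_congr rfl fun k hk => by rw [show b k τ = c k from dft_recover hc hk]).symm
  -- derivative of the projection term in space
  have hSN_deriv : ∀ (τ : ℝ) (x : ℝ), HasDerivAt (fun y => SN N (gf τ) y)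
      (∑ l ∈ Ic, fc (gf τ) l * (Complex.I * (l:ℂ)) * Complex.exp (Complex.I * (l:ℂ) * (x:ℂ))) x :=
    fun τ x => hasDerivAt_trig (fun l => fc (gf τ) l) Ic x
  have hD_eq : ∀ τ x, deriv (fun y => SN N (gf τ) y) x
      = ∑ l ∈ Ic, fc (gf τ) l * (Complex.I * (l:ℂ)) * Complex.exp (Complex.I * (l:ℂ) * (x:ℂ)) :=
    fun τ x => (hSN_deriv τ x).deriv
  have hU_deriv : ∀ (τ : ℝ) (x : ℝ), HasDerivAt (fun y => uN τ y)
      (∑ l ∈ Ic, a l τ * (Complex.I * (l:ℂ)) * Complex.exp (Complex.I * (l:ℂ) * (x:ℂ))) x := by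
    intro τ x
    have h := hasDerivAt_trig (fun l => a l τ) Ic x
    have heq : (fun y : ℝ => ∑ l ∈ Ic, a l τ * Complex.exp (Complex.I * (l:ℂ) * (y:ℂ)))
        = fun y => uN τ y := funext fun y => (repr_u τ y).symm
    rwa [heq] at h
  have hE_eq : ∀ τ x, deriv (fun y => uN τ y) x
      = ∑ l ∈ Ic, a l τ * (Complex.I * (l:ℂ)) * Complex.exp (Complex.I * (l:ℂ) * (x:ℂ)) :=
    fun τ x => (hU_deriv τ x).deriv
  -- time derivatives of the DFT coefficients
  have ha' : ∀ τ, ∀ k ∈ Ic, HasDerivAt (a k) (-(fc (gf τ) k * (Complex.I * (k:ℂ)))) τ := by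
    intro τ k hk
    have h0 : HasDerivAt (fun σ => a k σ)
        ((1/((2*N+1 : ℕ):ℂ)) * ∑ j ∈ Finset.range (2*N+1),
          (fun x => -(deriv (fun y => SN N (gf τ) y) x)) ((2*Real.pi*j/((2*N+1:ℕ)) : ℝ)) *
            Complex.exp (-(Complex.I * (k:ℂ) * ((2*Real.pi*j/((2*N+1:ℕ)) : ℝ):ℂ)))) τ := by
      apply HasDerivAt.const_mul
      apply HasDerivAt.fun_sum
      intro j _
      exact (hpde1 τ _).mul_const _
    have hfrep : ∀ x:ℝ, (fun x => -(deriv (fun y => SN N (gf τ) y) x)) x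
        = ∑ l ∈ Ic, (fun l : ℤ => -(fc (gf τ) l * (Complex.I * (l:ℂ)))) l *
            Complex.exp (Complex.I * (l:ℂ) * (x:ℂ)) := by
      intro x
      simp only
      rw [hD_eq τ x, ← Finset.sum_neg_distrib]
      exact Finset.sum_congr rfl fun l _ => by ring
    have hval := dft_recover (N := N) hfrep hk
    rw [hval] at h0
    exact h0
  have hb' : ∀ τ, ∀ k ∈ Ic, HasDerivAt (b k) (-(a k τ * (Complex.I * (k:ℂ)))) τ := by
    intro τ k hk
    have h0 : HasDerivAt (fun σ => b k σ)
        ((1/((2*N+1 : ℕ):ℂ)) * ∑ j ∈ Finset.range (2*N+1),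
          (fun x => -(deriv (fun y => uN τ y) x)) ((2*Real.pi*j/((2*N+1:ℕ)) : ℝ)) *
            Complex.exp (-(Complex.I * (k:ℂ) * ((2*Real.pi*j/((2*N+1:ℕ)) : ℝ):ℂ)))) τ := by
      apply HasDerivAt.const_mul
      apply HasDerivAt.fun_sum
      intro j _
      exact (hpde2 τ _).mul_const _
    have hfrep : ∀ x:ℝ, (fun x => -(deriv (fun y => uN τ y) x)) x
        = ∑ l ∈ Ic, (fun l : ℤ => -(a l τ * (Complex.I * (l:ℂ)))) l *
            Complex.exp (Complex.I * (l:ℂ) * (x:ℂ)) := by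
      intro x
      simp only
      rw [hE_eq τ x, ← Finset.sum_neg_distrib]
      exact Finset.sum_congr rfl fun l _ => by ring
    have hval := dft_recover (N := N) hfrep hk
    rw [hval] at h0
    exact h0
  -- continuity of coefficients in time
  have hacont : ∀ k ∈ Ic, Continuous (a k) := fun k hk =>
    Differentiable.continuous (fun τ => (ha' τ k hk).differentiableAt)
  have hbcont : ∀ k ∈ Ic, Continuous (b k) := fun k hk =>
    Differentiable.continuous (fun τ => (hb' τ k hk).differentiableAt)
  have hnormtrig : ∀ (c : ℤ → ℂ) (x : ℝ),
      ‖∑ k ∈ Ic, c k * Complex.exp (Complex.I * (k:ℂ) * (x:ℂ))‖ ≤ ∑ k ∈ Ic, ‖c k‖ :=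
    fun c x => (norm_sum_le _ _).trans (le_of_eq (Finset.sum_congr rfl fun k _ => by
      rw [norm_mul, abs_exp_ilx, mul_one]))
  set SA : ℝ → ℝ := fun τ => ∑ k ∈ Ic, ‖a k τ‖ with hSA
  set SB : ℝ → ℝ := fun τ => ∑ k ∈ Ic, ‖b k τ‖ with hSB
  have hSAc : Continuous SA := continuous_finset_sum _ fun k hk => (hacont k hk).norm
  have hSBc : Continuous SB := continuous_finset_sum _ fun k hk => (hbcont k hk).norm
  have htmem : t ∈ Set.Icc (t-1) (t+1) := by constructor <;> linarith
  obtain ⟨τA, -, hCA⟩ := isCompact_Icc.exists_isMaxOn ⟨t, htmem⟩ hSAc.continuousOn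
  obtain ⟨τB, -, hCB⟩ := isCompact_Icc.exists_isMaxOn ⟨t, htmem⟩ hSBc.continuousOn
  set CA : ℝ := SA τA with hCAdef
  set CB : ℝ := SB τB with hCBdef
  have hCA0 : 0 ≤ CA := Finset.sum_nonneg fun k _ => norm_nonneg _
  have hCB0 : 0 ≤ CB := Finset.sum_nonneg fun k _ => norm_nonneg _
  have hub : ∀ τ ∈ Set.Icc (t-1) (t+1), ∀ x : ℝ, |(uN τ x).re| ≤ CA := by
    intro τ hτ x
    calc |(uN τ x).re| ≤ ‖uN τ x‖ := by
          exact Complex.abs_re_le_norm _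
    _ ≤ SA τ := by rw [repr_u τ x]; exact hnormtrig _ x
    _ ≤ CA := hCA hτ
  have hvb : ∀ τ ∈ Set.Icc (t-1) (t+1), ∀ x : ℝ, |(vN τ x).re| ≤ CB := by
    intro τ hτ x
    calc |(vN τ x).re| ≤ ‖vN τ x‖ := by
          exact Complex.abs_re_le_norm _
    _ ≤ SB τ := by rw [repr_v τ x]; exact hnormtrig _ x
    _ ≤ CB := hCB hτ
  -- continuity of q and Q
  have hqc : Continuous q := continuous_iff_continuousAt.mpr fun y => (hq y).continuousAt
  have hQc : Continuous Q := continuous_iff_continuousAt.mpr fun y => (hQ y).continuousAt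
  obtain ⟨y0, -, hy0⟩ := (isCompact_Icc (a := -CB) (b := CB)).exists_isMaxOn
    ⟨0, by constructor <;> linarith⟩ (hqc.abs.continuousOn)
  set Mq : ℝ := |q y0| with hMqdef
  have hMq0 : 0 ≤ Mq := abs_nonneg _
  have hqb : ∀ τ ∈ Set.Icc (t-1) (t+1), ∀ x : ℝ, |q ((vN τ x).re)| ≤ Mq := by
    intro τ hτ x
    refine hy0 ?_
    have := hvb τ hτ x
    rw [abs_le] at this
    exact ⟨this.1, this.2⟩
  -- bound on Fourier coefficients of q(vN)
  have hγb : ∀ τ ∈ Set.Icc (t-1) (t+1), ∀ l : ℤ, ‖fc (gf τ) l‖ ≤ Mq := by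
    intro τ hτ l
    have hfc : fc (gf τ) l = (1/(2*Real.pi)) • ∫ x in (0:ℝ)..(2*Real.pi),
        gf τ x * Complex.exp (-(Complex.I*(l:ℂ)*(x:ℂ))) := rfl
    rw [hfc, norm_smul]
    have hpi : (0:ℝ) < 2*Real.pi := by positivity
    have hnint : ‖∫ x in (0:ℝ)..(2*Real.pi), gf τ x * Complex.exp (-(Complex.I*(l:ℂ)*(x:ℂ)))‖
        ≤ Mq * |2*Real.pi - 0| := by
      apply intervalIntegral.norm_integral_le_of_norm_le_const
      intro x _
      rw [norm_mul]
      have he : -(Complex.I*(l:ℂ)*(x:ℂ)) = Complex.I*(((-l : ℤ):ℤ):ℂ)*(x:ℂ) := by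
        push_cast; ring
      rw [he, abs_exp_ilx, mul_one]
      have : ‖gf τ x‖ = |q ((vN τ x).re)| := by
        rw [hgf]; exact Complex.norm_real _
      rw [this]
      exact hqb τ hτ x
    calc ‖(1/(2*Real.pi) : ℝ)‖ * ‖∫ x in (0:ℝ)..(2*Real.pi),
          gf τ x * Complex.exp (-(Complex.I*(l:ℂ)*(x:ℂ)))‖
        ≤ ‖(1/(2*Real.pi) : ℝ)‖ * (Mq * |2*Real.pi - 0|) := by
          exact mul_le_mul_of_nonneg_left hnint (norm_nonneg _)
    _ = Mq := by
        rw [Real.norm_eq_abs, sub_zero, abs_of_pos hpi,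
          abs_of_pos (by positivity : (0:ℝ) < 1/(2*Real.pi))]
        field_simp
  -- norm of integer exponentials coefficients
  have hIl : ∀ l ∈ Ic, ‖Complex.I * (l:ℂ)‖ ≤ (N:ℝ) := by
    intro l hl
    rw [norm_mul, Complex.norm_I, one_mul]
    have : ((l:ℤ):ℂ) = (((l:ℤ):ℝ):ℂ) := by push_cast; ring
    rw [this, Complex.norm_real, Real.norm_eq_abs]
    simp only [hIc, Finset.mem_Icc] at hl
    rw [abs_le]
    constructor <;> [exact_mod_cast hl.1; exact_mod_cast hl.2]
  set CI : ℝ := (Ic.card : ℝ) with hCIdef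
  -- bounds on the space-derivative trig polynomials
  have hρb : ∀ τ ∈ Set.Icc (t-1) (t+1), ∀ x : ℝ,
      ‖∑ l ∈ Ic, fc (gf τ) l * (Complex.I * (l:ℂ)) * Complex.exp (Complex.I * (l:ℂ) * (x:ℂ))‖
        ≤ CI * (Mq * (N:ℝ)) := by
    intro τ hτ x
    refine (norm_sum_le _ _).trans ?_
    have hterm : ∀ l ∈ Ic, ‖fc (gf τ) l * (Complex.I * (l:ℂ)) *
        Complex.exp (Complex.I * (l:ℂ) * (x:ℂ))‖ ≤ Mq * (N:ℝ) := by
      intro l hl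
      rw [norm_mul, norm_mul, abs_exp_ilx, mul_one]
      exact mul_le_mul (hγb τ hτ l) (hIl l hl) (norm_nonneg _) hMq0
    calc ∑ l ∈ Ic, ‖fc (gf τ) l * (Complex.I * (l:ℂ)) * Complex.exp (Complex.I * (l:ℂ) * (x:ℂ))‖
        ≤ ∑ _l ∈ Ic, Mq * (N:ℝ) := Finset.sum_le_sum hterm
    _ = CI * (Mq * (N:ℝ)) := by rw [Finset.sum_const, nsmul_eq_mul]
  have hσb : ∀ τ ∈ Set.Icc (t-1) (t+1), ∀ x : ℝ,
      ‖∑ l ∈ Ic, a l τ * (Complex.I * (l:ℂ)) * Complex.exp (Complex.I * (l:ℂ) * (x:ℂ))‖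
        ≤ CI * (CA * (N:ℝ)) := by
    intro τ hτ x
    refine (norm_sum_le _ _).trans ?_
    have hterm : ∀ l ∈ Ic, ‖a l τ * (Complex.I * (l:ℂ)) *
        Complex.exp (Complex.I * (l:ℂ) * (x:ℂ))‖ ≤ CA * (N:ℝ) := by
      intro l hl
      rw [norm_mul, norm_mul, abs_exp_ilx, mul_one]
      have h1 : ‖a l τ‖ ≤ CA :=
        le_trans (Finset.single_le_sum (f := fun k => ‖a k τ‖)
          (fun k _ => norm_nonneg _) hl) (hCA hτ)
      exact mul_le_mul h1 (hIl l hl) (norm_nonneg _) (le_trans (norm_nonneg _) h1)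
    calc ∑ l ∈ Ic, ‖a l τ * (Complex.I * (l:ℂ)) * Complex.exp (Complex.I * (l:ℂ) * (x:ℂ))‖
        ≤ ∑ _l ∈ Ic, CA * (N:ℝ) := Finset.sum_le_sum hterm
    _ = CI * (CA * (N:ℝ)) := by rw [Finset.sum_const, nsmul_eq_mul]
  set K : ℝ := CA * (CI * (Mq * (N:ℝ))) + Mq * (CI * (CA * (N:ℝ))) with hKdef
  -- the time derivative of the integrand
  have h_diff : ∀ (τ x : ℝ), HasDerivAt (fun σ => ‖uN σ x‖^2/2 + Q ((vN σ x).re))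
      ((uN τ x).re * (-(deriv (fun y => SN N (gf τ) y) x)).re
        + q ((vN τ x).re) * (-(deriv (fun y => uN τ y) x)).re) τ := by
    intro τ x
    have hru : HasDerivAt (fun σ => (uN σ x).re)
        ((-(deriv (fun y => SN N (gf τ) y) x)).re) τ := by
      have h := Complex.reCLM.hasFDerivAt.comp_hasDerivAt τ (hpde1 τ x)
      exact h
    have hrv : HasDerivAt (fun σ => (vN σ x).re)
        ((-(deriv (fun y => uN τ y) x)).re) τ := by
      have h := Complex.reCLM.hasFDerivAt.comp_hasDerivAt τ (hpde2 τ x)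
      exact h
    have h1 : HasDerivAt (fun σ => ‖uN σ x‖^2/2)
        ((uN τ x).re * (-(deriv (fun y => SN N (gf τ) y) x)).re) τ := by
      have heq : (fun σ => ‖uN σ x‖^2/2) = fun σ => ((uN σ x).re)^2/2 := by
        funext σ
        rw [Complex.sq_norm, Complex.normSq_apply, hureal σ x]
        ring
      rw [heq]
      have h2 := (hru.pow 2).div_const 2
      exact h2.congr_deriv (by norm_num; ring)
    have h2 : HasDerivAt (fun σ => Q ((vN σ x).re))
        (q ((vN τ x).re) * (-(deriv (fun y => uN τ y) x)).re) τ := (hQ _).comp τ hrv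
    exact h1.add h2
  -- continuity in space of everything at fixed time
  have hcu : ∀ τ, Continuous (fun x => uN τ x) := by
    intro τ
    have h := continuous_trig (fun k => a k τ) Ic
    have heq : (fun y : ℝ => ∑ l ∈ Ic, a l τ * Complex.exp (Complex.I * (l:ℂ) * (y:ℂ)))
        = fun y => uN τ y := funext fun y => (repr_u τ y).symm
    rwa [heq] at h
  have hcv : ∀ τ, Continuous (fun x => vN τ x) := by
    intro τ
    have h := continuous_trig (fun k => b k τ) Ic
    have heq : (fun y : ℝ => ∑ l ∈ Ic, b l τ * Complex.exp (Complex.I * (l:ℂ) * (y:ℂ)))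
        = fun y => vN τ y := funext fun y => (repr_v τ y).symm
    rwa [heq] at h
  have hF_cont : ∀ τ, Continuous (fun x => ‖uN τ x‖^2/2 + Q ((vN τ x).re)) := fun τ =>
    (((hcu τ).norm.pow 2).div_const 2).add (hQc.comp (Complex.continuous_re.comp (hcv τ)))
  have hDcont : ∀ τ, Continuous (fun x => deriv (fun y => SN N (gf τ) y) x) := by
    intro τ
    have heq : (fun x : ℝ => ∑ l ∈ Ic, fc (gf τ) l * (Complex.I * (l:ℂ)) *
        Complex.exp (Complex.I * (l:ℂ) * (x:ℂ))) = fun x => deriv (fun y => SN N (gf τ) y) x :=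
      funext fun x => (hD_eq τ x).symm
    rw [← heq]
    exact continuous_finset_sum _ fun l _ => cont_term _ l
  have hEcont : ∀ τ, Continuous (fun x => deriv (fun y => uN τ y) x) := by
    intro τ
    have heq : (fun x : ℝ => ∑ l ∈ Ic, a l τ * (Complex.I * (l:ℂ)) *
        Complex.exp (Complex.I * (l:ℂ) * (x:ℂ))) = fun x => deriv (fun y => uN τ y) x :=
      funext fun x => (hE_eq τ x).symm
    rw [← heq]
    exact continuous_finset_sum _ fun l _ => cont_term _ l
  have hF'cont : Continuous (fun x => (uN t x).re * (-(deriv (fun y => SN N (gf t) y) x)).re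
      + q ((vN t x).re) * (-(deriv (fun y => uN t y) x)).re) :=
    ((Complex.continuous_re.comp (hcu t)).mul
        (Complex.continuous_re.comp (hDcont t).neg)).add
      ((hqc.comp (Complex.continuous_re.comp (hcv t))).mul
        (Complex.continuous_re.comp (hEcont t).neg))
  -- uniform bound on the time derivative
  have hbound : ∀ τ ∈ Metric.ball t 1, ∀ x : ℝ,
      ‖(uN τ x).re * (-(deriv (fun y => SN N (gf τ) y) x)).re
        + q ((vN τ x).re) * (-(deriv (fun y => uN τ y) x)).re‖ ≤ K := by
    intro τ hτ x
    have hτ' : τ ∈ Set.Icc (t-1) (t+1) := by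
      rw [Metric.mem_ball, Real.dist_eq] at hτ
      have := abs_lt.mp hτ
      constructor <;> linarith [this.1, this.2]
    rw [Real.norm_eq_abs]
    have hρ : |(-(deriv (fun y => SN N (gf τ) y) x)).re| ≤ CI * (Mq * (N:ℝ)) := by
      calc |(-(deriv (fun y => SN N (gf τ) y) x)).re|
          ≤ ‖-(deriv (fun y => SN N (gf τ) y) x)‖ := by
            exact Complex.abs_re_le_norm _
      _ = ‖deriv (fun y => SN N (gf τ) y) x‖ := norm_neg _
      _ ≤ CI * (Mq * (N:ℝ)) := by rw [hD_eq τ x]; exact hρb τ hτ' x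
    have hσ : |(-(deriv (fun y => uN τ y) x)).re| ≤ CI * (CA * (N:ℝ)) := by
      calc |(-(deriv (fun y => uN τ y) x)).re|
          ≤ ‖-(deriv (fun y => uN τ y) x)‖ := by
            exact Complex.abs_re_le_norm _
      _ = ‖deriv (fun y => uN τ y) x‖ := norm_neg _
      _ ≤ CI * (CA * (N:ℝ)) := by rw [hE_eq τ x]; exact hσb τ hτ' x
    calc |(uN τ x).re * (-(deriv (fun y => SN N (gf τ) y) x)).re
        + q ((vN τ x).re) * (-(deriv (fun y => uN τ y) x)).re|
        ≤ |(uN τ x).re * (-(deriv (fun y => SN N (gf τ) y) x)).re|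
          + |q ((vN τ x).re) * (-(deriv (fun y => uN τ y) x)).re| := abs_add_le _ _
    _ = |(uN τ x).re| * |(-(deriv (fun y => SN N (gf τ) y) x)).re|
          + |q ((vN τ x).re)| * |(-(deriv (fun y => uN τ y) x)).re| := by
        rw [abs_mul, abs_mul]
    _ ≤ CA * (CI * (Mq * (N:ℝ))) + Mq * (CI * (CA * (N:ℝ))) := by
        apply add_le_add
        · exact mul_le_mul (hub τ hτ' x) hρ (abs_nonneg _) hCA0
        · exact mul_le_mul (hqb τ hτ' x) hσ (abs_nonneg _) hMq0
    _ = K := rfl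
  -- the main application of differentiation under the integral sign
  have main := (intervalIntegral.hasDerivAt_integral_of_dominated_loc_of_deriv_le
      (F := fun τ x => ‖uN τ x‖^2/2 + Q ((vN τ x).re))
      (F' := fun τ x => (uN τ x).re * (-(deriv (fun y => SN N (gf τ) y) x)).re
          + q ((vN τ x).re) * (-(deriv (fun y => uN τ y) x)).re)
      (x₀ := t) (a := 0) (b := 2*Real.pi) (bound := fun _ => K) (s := Metric.ball t 1) (μ := MeasureTheory.volume) (Metric.ball_mem_nhds t one_pos)
      (Filter.Eventually.of_forall fun τ => (hF_cont τ).aestronglyMeasurable)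
      ((hF_cont t).intervalIntegrable _ _)
      hF'cont.aestronglyMeasurable
      (MeasureTheory.ae_of_all _ fun x _ τ hτ => hbound τ hτ x)
      intervalIntegrable_const
      (MeasureTheory.ae_of_all _ fun x _ τ _ => h_diff τ x)).2
  -- now show that the value of the derivative is zero
  have hwcont : Continuous (fun x => gf t x) :=
    Complex.continuous_ofReal.comp (hqc.comp (Complex.continuous_re.comp (hcv t)))
  have hDre : ∀ x : ℝ, (uN t x).re * (-(deriv (fun y => SN N (gf t) y) x)).re
      + q ((vN t x).re) * (-(deriv (fun y => uN t y) x)).re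
      = (uN t x * (-(deriv (fun y => SN N (gf t) y) x))
          + gf t x * (-(deriv (fun y => uN t y) x))).re := by
    intro x
    rw [Complex.add_re, Complex.mul_re, Complex.mul_re, hureal t x,
      show (gf t x).im = 0 from Complex.ofReal_im _,
      show (gf t x).re = q ((vN t x).re) from Complex.ofReal_re _]
    ring
  have hfcont : Continuous (fun x => uN t x * (-(deriv (fun y => SN N (gf t) y) x))
      + gf t x * (-(deriv (fun y => uN t y) x))) :=
    ((hcu t).mul (hDcont t).neg).add (hwcont.mul (hEcont t).neg)
  have hint1 : IntervalIntegrable (fun x => uN t x * (-(deriv (fun y => SN N (gf t) y) x)))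
      MeasureTheory.volume 0 (2*Real.pi) := ((hcu t).mul (hDcont t).neg).intervalIntegrable _ _
  have hint2 : IntervalIntegrable (fun x => gf t x * (-(deriv (fun y => uN t y) x)))
      MeasureTheory.volume 0 (2*Real.pi) := (hwcont.mul (hEcont t).neg).intervalIntegrable _ _
  -- the first complex integral
  have e1 : (∫ x in (0:ℝ)..(2*Real.pi), uN t x * (-(deriv (fun y => SN N (gf t) y) x)))
      = -(((2*Real.pi:ℝ):ℂ) * ∑ k ∈ Ic, a k t *
          (fc (gf t) (-k) * (Complex.I * ((-k : ℤ):ℂ)))) := by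
    have hcongr : ∀ x ∈ Set.uIcc (0:ℝ) (2*Real.pi),
        uN t x * (-(deriv (fun y => SN N (gf t) y) x))
        = -((∑ k ∈ Ic, a k t * Complex.exp (Complex.I * (k:ℂ) * (x:ℂ))) *
            (∑ l ∈ Ic, (fc (gf t) l * (Complex.I * (l:ℂ))) *
              Complex.exp (Complex.I * (l:ℂ) * (x:ℂ)))) := by
      intro x _
      rw [repr_u t x, hD_eq t x]
      exact mul_neg _ _
    rw [intervalIntegral.integral_congr hcongr, intervalIntegral.integral_neg,
      integral_trig_mul (N := N) (fun k => a k t) (fun l => fc (gf t) l * (Complex.I * (l:ℂ)))]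
  -- the second complex integral
  have e2 : (∫ x in (0:ℝ)..(2*Real.pi), gf t x * (-(deriv (fun y => uN t y) x)))
      = ∑ l ∈ Ic, (-(a l t * (Complex.I * (l:ℂ)))) * ((2*Real.pi : ℝ) • fc (gf t) (-l)) := by
    have hcongr : ∀ x ∈ Set.uIcc (0:ℝ) (2*Real.pi),
        gf t x * (-(deriv (fun y => uN t y) x))
        = ∑ l ∈ Ic, (-(a l t * (Complex.I * (l:ℂ)))) *
            (gf t x * Complex.exp (Complex.I * (l:ℂ) * (x:ℂ))) := by
      intro x _
      rw [hE_eq t x, mul_neg, Finset.mul_sum, ← Finset.sum_neg_distrib]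
      exact Finset.sum_congr rfl fun l _ => by ring
    rw [intervalIntegral.integral_congr hcongr,
      intervalIntegral.integral_finset_sum
        (f := fun l x => (-(a l t * (Complex.I * (l:ℂ)))) *
          (gf t x * Complex.exp (Complex.I * (l:ℂ) * (x:ℂ))))
        (fun l _ =>
        (continuous_const.mul (hwcont.mul (Complex.continuous_exp.comp
          (continuous_const.mul Complex.continuous_ofReal)))).intervalIntegrable _ _)]
    exact Finset.sum_congr rfl fun l _ => by
      rw [intervalIntegral.integral_const_mul, integral_mul_exp (gf t) l]
  -- total
  have hzero : (∫ x in (0:ℝ)..(2*Real.pi), (uN t x * (-(deriv (fun y => SN N (gf t) y) x))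
      + gf t x * (-(deriv (fun y => uN t y) x)))) = 0 := by
    rw [intervalIntegral.integral_add hint1 hint2, e1, e2]
    simp only [Complex.real_smul]
    rw [Finset.mul_sum, ← Finset.sum_neg_distrib, ← Finset.sum_add_distrib]
    refine Finset.sum_eq_zero fun k hk => ?_
    push_cast
    ring
  have key : (∫ x in (0:ℝ)..(2*Real.pi), ((uN t x).re * (-(deriv (fun y => SN N (gf t) y) x)).re
      + q ((vN t x).re) * (-(deriv (fun y => uN t y) x)).re)) = 0 := by
    have h1 : (∫ x in (0:ℝ)..(2*Real.pi), ((uN t x).re *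
        (-(deriv (fun y => SN N (gf t) y) x)).re
        + q ((vN t x).re) * (-(deriv (fun y => uN t y) x)).re))
        = ∫ x in (0:ℝ)..(2*Real.pi), (uN t x * (-(deriv (fun y => SN N (gf t) y) x))
            + gf t x * (-(deriv (fun y => uN t y) x))).re :=
      intervalIntegral.integral_congr fun x _ => hDre x
    have h2 : (∫ x in (0:ℝ)..(2*Real.pi), (uN t x * (-(deriv (fun y => SN N (gf t) y) x))
        + gf t x * (-(deriv (fun y => uN t y) x))).re)
        = (∫ x in (0:ℝ)..(2*Real.pi), (uN t x * (-(deriv (fun y => SN N (gf t) y) x))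
            + gf t x * (-(deriv (fun y => uN t y) x)))).re :=
      Complex.reCLM.intervalIntegral_comp_comm (hfcont.intervalIntegrable _ _)
    rw [h1, h2, hzero]
    rfl
  rw [key] at main
  exact main
end
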